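/- Let R be an associative unital ring, ι an index type, and X_i (i ∈ ι) a family of left R-modules. Let (P_n, f_n)_{n∈ℤ} be an exact complex of projective R-modules that is Hom_R(−,X_i)-exact for every i ∈ ι. Let (A_n)_{n∈ℤ} be a subcomplex such that the restricted complex is exact and is Hom_R(−,X_i)-exact for every i ∈ ι, and such that P_n/A_n is projective for every n. Then the quotient complex (P_n/A_n) with the induced maps is an exact complex of projective R-modules that is Hom_R(−,X_i)-exact for every i ∈ ι, and the kernel of its map in degree 0 is isomorphic as an R-module to ker(f_0)/(A_0 ∩ ker(f_0)); consequently ker(f_0)/(A_0 ∩ ker(f_0)) is Gorenstein projective relative to the family (X_i), i.e. it is the degree-0 kernel of an exact, Hom_R(−,X_i)-exact (for all i) complex of projective modules. -/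

import Mathlib

/-!
STATEMENT 13: if `(P n, f n)` is an exact complex of projective modules that is
`Hom_R(-,X i)`-exact for every `i`, and `(A n)` is a subcomplex whose restricted
complex is exact and `Hom_R(-,X i)`-exact for every `i`, with each quotient
`P n ⧸ A n` projective, then the quotient complex is an exact,
`Hom_R(-,X i)`-exact (for all `i`) complex of projective modules, its degree-0 kernel
is isomorphic to `ker (f 0) / (A 0 ⊓ ker (f 0))`, and consequently
`ker (f 0) / (A 0 ⊓ ker (f 0))` is Gorenstein projective relative to the family `X`.
-/

universe u v w x

variable {R : Type u} [Ring R]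

/-- A complex `(N n, g n)_{n ∈ ℤ}` is `Hom_R(-,X)`-exact if for every `n` and every
linear `σ : N (n+1) →ₗ X` with `σ ∘ g n = 0` there is `τ : N (n+2) →ₗ X` with
`σ = τ ∘ g (n+1)`. -/
def IsHomExact {N : ℤ → Type v} [∀ n, AddCommGroup (N n)] [∀ n, Module R (N n)]
    (g : ∀ n, N n →ₗ[R] N (n + 1)) (X : Type x) [AddCommGroup X] [Module R X] : Prop :=
  ∀ n : ℤ, ∀ σ : N (n + 1) →ₗ[R] X, σ.comp (g n) = 0 →
    ∃ τ : N (n + 1 + 1) →ₗ[R] X, σ = τ.comp (g (n + 1))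

/-- `G` is Gorenstein projective relative to the family `(X i)` if it is (isomorphic to)
the degree-0 kernel of an exact complex of projective modules which is
`Hom_R(-,X i)`-exact for every `i`. -/
def IsRelGorensteinProjective (R : Type u) [Ring R] {ι : Type w} (X : ι → Type x)
    [∀ i, AddCommGroup (X i)] [∀ i, Module R (X i)]
    (G : Type v) [AddCommGroup G] [Module R G] : Prop :=
  ∃ (Q : ℤ → ModuleCat.{v} R) (d : ∀ n, Q n →ₗ[R] Q (n + 1)),
    (∀ n, Module.Projective R (Q n)) ∧
    (∀ n, LinearMap.range (d n) = LinearMap.ker (d (n + 1))) ∧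
    (∀ i, IsHomExact d (X i)) ∧
    Nonempty (G ≃ₗ[R] LinearMap.ker (d 0))

variable {M : ℤ → Type v} [∀ n, AddCommGroup (M n)] [∀ n, Module R (M n)]

/-- The `n`-th map of the restricted complex of a subcomplex `(A n)`. -/
def restrictedMap (f : ∀ n, M n →ₗ[R] M (n + 1)) (A : ∀ n, Submodule R (M n))
    (hA : ∀ n, A n ≤ (A (n + 1)).comap (f n)) (n : ℤ) : A n →ₗ[R] A (n + 1) :=
  (f n).restrict (fun x hx => hA n hx)

/-- The `n`-th map of the quotient complex `(M n ⧸ A n)`. -/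
def quotientMap (f : ∀ n, M n →ₗ[R] M (n + 1)) (A : ∀ n, Submodule R (M n))
    (hA : ∀ n, A n ≤ (A (n + 1)).comap (f n)) (n : ℤ) :
    (M n ⧸ A n) →ₗ[R] (M (n + 1) ⧸ A (n + 1)) :=
  Submodule.mapQ (A n) (A (n + 1)) (f n) (hA n)

theorem quotient_complex_gorenstein {ι : Type w} (X : ι → Type x)
    [∀ i, AddCommGroup (X i)] [∀ i, Module R (X i)]
    {f : ∀ n, M n →ₗ[R] M (n + 1)}
    (hex : ∀ n, LinearMap.range (f n) = LinearMap.ker (f (n + 1)))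
    (hproj : ∀ n, Module.Projective R (M n))
    (hfX : ∀ i, IsHomExact f (X i))
    {A : ∀ n, Submodule R (M n)} (hA : ∀ n, A n ≤ (A (n + 1)).comap (f n))
    (hexA : ∀ n, LinearMap.range (restrictedMap f A hA n) =
      LinearMap.ker (restrictedMap f A hA (n + 1)))
    (hAX : ∀ i, IsHomExact (restrictedMap f A hA) (X i))
    (hquotproj : ∀ n, Module.Projective R (M n ⧸ A n)) :
    (∀ n, LinearMap.range (quotientMap f A hA n) =
        LinearMap.ker (quotientMap f A hA (n + 1))) ∧
    (∀ n, Module.Projective R (M n ⧸ A n)) ∧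
    (∀ i, IsHomExact (quotientMap f A hA) (X i)) ∧
    Nonempty ((LinearMap.ker (quotientMap f A hA 0)) ≃ₗ[R]
      (↥(LinearMap.ker (f 0)) ⧸
        Submodule.comap (LinearMap.ker (f 0)).subtype (A 0 ⊓ LinearMap.ker (f 0)))) ∧
    IsRelGorensteinProjective R X
      (↥(LinearMap.ker (f 0)) ⧸
        Submodule.comap (LinearMap.ker (f 0)).subtype (A 0 ⊓ LinearMap.ker (f 0))) := by
  classical
  -- f ∘ f = 0
  have hff : ∀ m : ℤ, ∀ x : M m, f (m + 1) (f m x) = 0 := by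
    intro m x
    have : f m x ∈ LinearMap.ker (f (m + 1)) := (hex m) ▸ LinearMap.mem_range_self _ x
    exact this
  have hresc : ∀ m : ℤ, ∀ a : A m, (restrictedMap f A hA m a : M (m + 1)) = f m (a : M m) := by
    intro m a; rfl
  -- exactness of the quotient complex
  have hexQ : ∀ n, LinearMap.range (quotientMap f A hA n) =
      LinearMap.ker (quotientMap f A hA (n + 1)) := by
    intro n
    apply le_antisymm
    · rintro _ ⟨z, rfl⟩
      obtain ⟨w, rfl⟩ := Submodule.mkQ_surjective (A n) z
      show quotientMap f A hA (n + 1) (quotientMap f A hA n (Submodule.Quotient.mk w)) = 0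
      simp [quotientMap, Submodule.mapQ_apply, hff n w]
    · rintro q hq
      obtain ⟨x, rfl⟩ := Submodule.mkQ_surjective (A (n + 1)) q
      have hx : f (n + 1) x ∈ A (n + 1 + 1) := by
        have : quotientMap f A hA (n + 1) (Submodule.Quotient.mk x) = 0 := hq
        rw [quotientMap, Submodule.mapQ_apply, Submodule.Quotient.mk_eq_zero] at this
        exact this
      have hker : restrictedMap f A hA (n + 1 + 1) ⟨f (n + 1) x, hx⟩ = 0 := by
        apply Subtype.ext
        simpa [hresc] using hff (n + 1) x
      have hmem : (⟨f (n + 1) x, hx⟩ : A (n + 1 + 1)) ∈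
          LinearMap.range (restrictedMap f A hA (n + 1)) := by
        rw [hexA (n + 1)]; exact hker
      obtain ⟨b, hb⟩ := hmem
      have hb' : f (n + 1) (b : M (n + 1)) = f (n + 1) x := by
        have := congrArg (Subtype.val) hb
        simpa [hresc] using this
      have hkx : x - (b : M (n + 1)) ∈ LinearMap.ker (f (n + 1)) := by
        simp [LinearMap.mem_ker, map_sub, hb']
      rw [← hex n] at hkx
      obtain ⟨y, hy⟩ := hkx
      refine ⟨Submodule.Quotient.mk y, ?_⟩
      rw [quotientMap, Submodule.mapQ_apply, hy]
      refine (Submodule.Quotient.eq _).2 ?_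
      simpa using (A (n + 1)).neg_mem b.2
  -- Hom-exactness of the quotient complex
  have hQX : ∀ i, IsHomExact (quotientMap f A hA) (X i) := by
    intro i n σ hσ
    set σ' : M (n + 1) →ₗ[R] X i := σ.comp (Submodule.mkQ (A (n + 1))) with hσ'def
    have hσ' : σ'.comp (f n) = 0 := by
      ext x
      have h1 := LinearMap.congr_fun hσ (Submodule.Quotient.mk x)
      simpa [σ', quotientMap, Submodule.mapQ_apply] using h1
    obtain ⟨τ', hτ'⟩ := hfX i n σ' hσ'
    set τ'' : A (n + 1 + 1) →ₗ[R] X i := τ'.comp (A (n + 1 + 1)).subtype with hτ''def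
    have hτ'' : τ''.comp (restrictedMap f A hA (n + 1)) = 0 := by
      ext a
      have h2 : τ' (f (n + 1) (a : M (n + 1))) = σ' (a : M (n + 1)) :=
        (LinearMap.congr_fun hτ' (a : M (n + 1))).symm
      have h3 : σ' (a : M (n + 1)) = 0 := by
        simp [σ', Submodule.Quotient.mk_eq_zero, (Submodule.Quotient.mk_eq_zero _).2 a.2]
      simp [τ'', hresc, h2, h3]
    obtain ⟨ρ, hρ⟩ := hAX i (n + 1) τ'' hτ''
    -- splitting of M (n+1+1+1) over A (n+1+1+1)
    obtain ⟨s, hs⟩ := Module.projective_lifting_property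
      (Submodule.mkQ (A (n + 1 + 1 + 1))) LinearMap.id
      (Submodule.mkQ_surjective _)
    have hrmem : ∀ x : M (n + 1 + 1 + 1),
        x - s (Submodule.Quotient.mk x) ∈ A (n + 1 + 1 + 1) := by
      intro x
      rw [← Submodule.Quotient.mk_eq_zero]
      have : Submodule.mkQ (A (n + 1 + 1 + 1)) (s (Submodule.Quotient.mk x)) =
          Submodule.Quotient.mk x := LinearMap.congr_fun hs (Submodule.Quotient.mk x)
      simp only [Submodule.Quotient.mk_sub]
      rw [show (Submodule.Quotient.mk (s (Submodule.Quotient.mk x)) :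
        M (n+1+1+1) ⧸ A (n+1+1+1)) = Submodule.Quotient.mk x from this]
      simp
    set r' : M (n + 1 + 1 + 1) →ₗ[R] A (n + 1 + 1 + 1) :=
      LinearMap.codRestrict _ (LinearMap.id - s.comp (Submodule.mkQ _)) hrmem with hr'def
    have hr'A : ∀ a : M (n + 1 + 1 + 1), a ∈ A (n + 1 + 1 + 1) →
        ((r' a : A (n + 1 + 1 + 1)) : M (n + 1 + 1 + 1)) = a := by
      intro a ha
      have : (Submodule.Quotient.mk a : M (n+1+1+1) ⧸ A (n+1+1+1)) = 0 :=
        (Submodule.Quotient.mk_eq_zero _).2 ha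
      show a - s (Submodule.Quotient.mk a) = a
      rw [this, map_zero, sub_zero]
    set τ₂ : M (n + 1 + 1) →ₗ[R] X i :=
      τ' - (ρ.comp r').comp (f (n + 1 + 1)) with hτ₂def
    have hvanish : A (n + 1 + 1) ≤ LinearMap.ker τ₂ := by
      intro a ha
      have hfa : f (n + 1 + 1) a ∈ A (n + 1 + 1 + 1) := hA _ ha
      have hr : r' (f (n + 1 + 1) a) = ⟨f (n + 1 + 1) a, hfa⟩ :=
        Subtype.ext (hr'A _ hfa)
      have hrest : restrictedMap f A hA (n + 1 + 1) ⟨a, ha⟩ = ⟨f (n + 1 + 1) a, hfa⟩ :=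
        Subtype.ext rfl
      have h4 : ρ (⟨f (n + 1 + 1) a, hfa⟩ : A (n + 1 + 1 + 1)) = τ' a := by
        have := LinearMap.congr_fun hρ ⟨a, ha⟩
        simp only [LinearMap.comp_apply] at this
        rw [hrest] at this
        have h5 : τ'' ⟨a, ha⟩ = τ' a := rfl
        rw [h5] at this
        exact this.symm
      simp [τ₂, LinearMap.mem_ker, hr, h4]
    set τbar : (M (n + 1 + 1) ⧸ A (n + 1 + 1)) →ₗ[R] X i :=
      Submodule.liftQ _ τ₂ hvanish with hτbardef
    refine ⟨τbar, ?_⟩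
    apply LinearMap.ext
    intro q
    obtain ⟨x, rfl⟩ := Submodule.mkQ_surjective (A (n + 1)) q
    have h5 : τ' (f (n + 1) x) = σ' x := (LinearMap.congr_fun hτ' x).symm
    have h6 : f (n + 1 + 1) (f (n + 1) x) = 0 := hff (n + 1) x
    show σ (Submodule.Quotient.mk x) =
      τbar (quotientMap f A hA (n + 1) (Submodule.Quotient.mk x))
    rw [quotientMap, Submodule.mapQ_apply]
    show σ (Submodule.Quotient.mk x) = τ₂ (f (n + 1) x)
    simp [τ₂, h5, h6, σ']
  -- the degree-0-kernel isomorphism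
  have hφmem : ∀ x : LinearMap.ker (f 0),
      (Submodule.Quotient.mk (x : M 0) : M 0 ⧸ A 0) ∈
        LinearMap.ker (quotientMap f A hA 0) := by
    intro x
    have hx : f 0 (x : M 0) = 0 := x.2
    simp [LinearMap.mem_ker, quotientMap, Submodule.mapQ_apply, hx]
  set φ : (LinearMap.ker (f 0)) →ₗ[R] (LinearMap.ker (quotientMap f A hA 0)) :=
    LinearMap.codRestrict _
      ((Submodule.mkQ (A 0)).comp (LinearMap.ker (f 0)).subtype) hφmem with hφdef
  have hφsurj : Function.Surjective φ := by
    rintro ⟨q, hq⟩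
    obtain ⟨x, rfl⟩ := Submodule.mkQ_surjective (A 0) q
    have hx : f 0 x ∈ A (0 + 1) := by
      have : quotientMap f A hA 0 (Submodule.Quotient.mk x) = 0 := hq
      rw [quotientMap, Submodule.mapQ_apply, Submodule.Quotient.mk_eq_zero] at this
      exact this
    have hker : restrictedMap f A hA (0 + 1) ⟨f 0 x, hx⟩ = 0 := by
      apply Subtype.ext
      rw [hresc]
      exact hff 0 x
    have hmem : (⟨f 0 x, hx⟩ : A (0 + 1)) ∈
        LinearMap.range (restrictedMap f A hA 0) := by
      rw [hexA 0]; exact hker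
    obtain ⟨a, hb⟩ := hmem
    have hb' : f 0 (a : M 0) = f 0 x := by
      have := congrArg Subtype.val hb
      simpa [hresc] using this
    have hxk : x - (a : M 0) ∈ LinearMap.ker (f 0) := by
      show f 0 (x - (a : M 0)) = 0
      rw [map_sub, hb', sub_self]
    refine ⟨⟨x - (a : M 0), hxk⟩, ?_⟩
    apply Subtype.ext
    show (Submodule.Quotient.mk (x - (a : M 0)) : M 0 ⧸ A 0) = Submodule.Quotient.mk x
    refine (Submodule.Quotient.eq _).2 ?_
    simpa using (A 0).neg_mem a.2
  have hφker : LinearMap.ker φ =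
      Submodule.comap (LinearMap.ker (f 0)).subtype (A 0 ⊓ LinearMap.ker (f 0)) := by
    ext x
    simp only [LinearMap.mem_ker, Submodule.mem_comap, Submodule.mem_inf,
      Submodule.coe_subtype]
    constructor
    · intro h
      have : (Submodule.Quotient.mk (x : M 0) : M 0 ⧸ A 0) = 0 :=
        congrArg Subtype.val h
      exact ⟨(Submodule.Quotient.mk_eq_zero _).1 this, x.2⟩
    · intro h
      apply Subtype.ext
      show (Submodule.Quotient.mk (x : M 0) : M 0 ⧸ A 0) = 0
      exact (Submodule.Quotient.mk_eq_zero _).2 h.1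
  have e : (LinearMap.ker (quotientMap f A hA 0)) ≃ₗ[R]
      (↥(LinearMap.ker (f 0)) ⧸
        Submodule.comap (LinearMap.ker (f 0)).subtype (A 0 ⊓ LinearMap.ker (f 0))) :=
    (φ.quotKerEquivOfSurjective hφsurj).symm.trans
      (Submodule.quotEquivOfEq _ _ hφker)
  refine ⟨hexQ, hquotproj, hQX, ⟨e⟩, ?_⟩
  exact ⟨fun n => ModuleCat.of R (M n ⧸ A n), quotientMap f A hA,
    hquotproj, hexQ, hQX, ⟨e.symm⟩⟩
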